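/- Let F be a field, n ≥ 1, and A a subalgebra of M_n(F) such that every element of A is a nilpotent matrix, i.e., A is a nilalgebra of matrices. Then A is triangularizable: there is a basis of F^n with respect to which every element of A is strictly upper triangular; consequently A^n = 0. -/

import Mathlib

open Module

attribute [local instance] LieRing.ofAssociativeRing

section Aux

variable {F : Type*} [Field F] {n : ℕ}

/-- A product of strictly upper triangular matrices has vanishing entries
sufficiently far below the diagonal. -/
private lemma ut_prod (l : List (Matrix (Fin n) (Fin n) F))
    (h : ∀ M ∈ l, ∀ i j : Fin n, j ≤ i → M i j = 0) :
    ∀ i j : Fin n, (j : ℕ) < (i : ℕ) + l.length → l.prod i j = 0 := by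
  induction l with
  | nil =>
    intro i j hij
    simp only [List.length_nil, Nat.add_zero] at hij
    rw [List.prod_nil]
    exact Matrix.one_apply_ne (by intro e; subst e; omega)
  | cons M l ih =>
    intro i j hij
    rw [List.prod_cons, Matrix.mul_apply]
    refine Finset.sum_eq_zero fun k _ => ?_
    rcases le_or_gt (k : ℕ) (i : ℕ) with hk | hk
    · rw [h M List.mem_cons_self i k (Fin.le_def.mpr hk), zero_mul]
    · rw [ih (fun M' hM' => h M' (List.mem_cons_of_mem _ hM')) k j
        (by simp only [List.length_cons] at hij; omega), mul_zero]

private lemma conj_prod (P : Matrix (Fin n) (Fin n) F) (hP : IsUnit P)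
    (l : List (Matrix (Fin n) (Fin n) F)) :
    (l.map fun A => P⁻¹ * A * P).prod = P⁻¹ * l.prod * P := by
  have hdet := (Matrix.isUnit_iff_isUnit_det P).mp hP
  have h1 : P⁻¹ * P = 1 := Matrix.nonsing_inv_mul P hdet
  have h2 : P * P⁻¹ = 1 := Matrix.mul_nonsing_inv P hdet
  induction l with
  | nil => simp only [List.map_nil, List.prod_nil, mul_one, h1]
  | cons A l ih =>
    rw [List.map_cons, List.prod_cons, List.prod_cons, ih]
    simp only [← mul_assoc]
    rw [mul_assoc (P⁻¹ * A) P P⁻¹, h2, mul_one]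

set_option maxHeartbeats 1000000 in
/-- Given a chain of submodules from `⊥` to `⊤` along which every element of `𝒜`
descends, we can simultaneously strictly triangularize `𝒜`. -/
private lemma flag_basis
    (𝒜 : NonUnitalSubalgebra F (Matrix (Fin n) (Fin n) F))
    (U : ℕ → Submodule F (Fin n → F))
    (hU0 : U 0 = ⊥) {k : ℕ} (hUk : U k = ⊤)
    (hUstep : ∀ j, 1 ≤ j → ∀ A ∈ 𝒜, ∀ v ∈ U j, A.mulVec v ∈ U (j - 1)) :
    ∃ P : Matrix (Fin n) (Fin n) F, IsUnit P ∧
      ∀ A ∈ 𝒜, ∀ i j : Fin n, j ≤ i → (P⁻¹ * A * P) i j = 0 := by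
  classical
  -- a choice function picking a new vector outside `W` all of whose `𝒜`-images lie in `W`
  have hpick : ∀ W : Submodule F (Fin n → F), W ≠ ⊤ →
      ∃ x : Fin n → F, x ∉ W ∧ ∀ A ∈ 𝒜, A.mulVec x ∈ W := by
    intro W hW
    have hex : ∃ j, ¬ U j ≤ W := ⟨k, by rw [hUk]; simpa [top_le_iff] using hW⟩
    obtain ⟨x, hxU, hxW⟩ := SetLike.not_le_iff_exists.mp (Nat.find_spec hex)
    have h1 : 1 ≤ Nat.find hex := by
      rcases Nat.eq_zero_or_pos (Nat.find hex) with h | h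
      · exact absurd (h ▸ Nat.find_spec hex) (by rw [hU0]; simp)
      · exact h
    have hmin : U (Nat.find hex - 1) ≤ W := by
      by_contra hc
      exact Nat.find_min hex (by omega) hc
    exact ⟨x, hxW, fun A hA => hmin (hUstep _ h1 A hA x hxU)⟩
  let pick : Submodule F (Fin n → F) → (Fin n → F) := fun W =>
    if h : W ≠ ⊤ then (hpick W h).choose else 0
  have hpick1 : ∀ W, W ≠ ⊤ → pick W ∉ W := fun W h => by
    simp only [pick, dif_pos h]; exact (hpick W h).choose_spec.1
  have hpick2 : ∀ W, W ≠ ⊤ → ∀ A ∈ 𝒜, A.mulVec (pick W) ∈ W := fun W h => by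
    simp only [pick, dif_pos h]; exact (hpick W h).choose_spec.2
  -- build the flag
  let g : ℕ → Submodule F (Fin n → F) := fun i =>
    Nat.rec (motive := fun _ => Submodule F (Fin n → F)) ⊥
      (fun _ W => W ⊔ Submodule.span F {pick W}) i
  let x : ℕ → (Fin n → F) := fun i => pick (g i)
  have hg0 : g 0 = ⊥ := rfl
  have hgsucc : ∀ i, g (i + 1) = g i ⊔ Submodule.span F {x i} := fun i => rfl
  have hrank : ∀ i ≤ n, finrank F (g i) = i := by
    intro i
    induction i with
    | zero => intro _; rw [hg0]; exact finrank_bot F (Fin n → F)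
    | succ i ih =>
      intro hin
      have hi := ih (by omega)
      have hne : g i ≠ ⊤ := by
        intro h
        rw [h, finrank_top, Module.finrank_pi, Fintype.card_fin] at hi
        omega
      have hx : x i ∉ g i := hpick1 _ hne
      have hx0 : x i ≠ 0 := fun h => hx (h ▸ (g i).zero_mem)
      have hdisj : g i ⊓ Submodule.span F {x i} = ⊥ :=
        ((Submodule.disjoint_span_singleton' hx0).mpr hx).eq_bot
      have hsum := Submodule.finrank_sup_add_finrank_inf_eq (g i) (Submodule.span F {x i})
      rw [hdisj, finrank_bot, finrank_span_singleton hx0, hi] at hsum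
      rw [hgsucc]
      omega
  have hgne : ∀ i < n, g i ≠ ⊤ := by
    intro i hi h
    have := hrank i (le_of_lt hi)
    rw [h, finrank_top, Module.finrank_pi, Fintype.card_fin] at this
    omega
  have hgtop : g n = ⊤ := by
    apply Submodule.eq_top_of_finrank_eq
    rw [hrank n le_rfl, Module.finrank_pi, Fintype.card_fin]
  have hgspan : ∀ i, g i = Submodule.span F (x '' Set.Iio i) := by
    intro i
    induction i with
    | zero =>
      rw [hg0, show Set.Iio 0 = (∅ : Set ℕ) from by ext a; simp, Set.image_empty,
        Submodule.span_empty]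
    | succ i ih =>
      rw [hgsucc i, ih, ← Submodule.span_union,
        show x '' Set.Iio (i + 1) = x '' Set.Iio i ∪ {x i} from by
          rw [show Set.Iio (i + 1) = insert i (Set.Iio i) from by ext a; simp,
            Set.image_insert_eq, Set.insert_eq, Set.union_comm]]
  have hrange : ∀ m : ℕ, Set.range (fun i : Fin m => x i) = x '' Set.Iio m := by
    intro m
    ext v
    constructor
    · rintro ⟨j, rfl⟩; exact ⟨j, j.isLt, rfl⟩
    · rintro ⟨a, ha, rfl⟩; exact ⟨⟨a, ha⟩, rfl⟩
  have hli : ∀ m, m ≤ n → LinearIndependent F (fun i : Fin m => x i) := by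
    intro m
    induction m with
    | zero => intro _; exact linearIndependent_empty_type
    | succ m ih =>
      intro hmn
      have heq : (fun i : Fin (m + 1) => x i) = Fin.snoc (fun i : Fin m => x i) (x m) := by
        funext i
        refine Fin.lastCases ?_ ?_ i
        · simp
        · intro j; simp
      rw [heq, linearIndependent_fin_snoc]
      refine ⟨ih (by omega), ?_⟩
      rw [hrange, ← hgspan]
      exact hpick1 _ (hgne m (by omega))
  let b : Basis (Fin n) F (Fin n → F) := Module.Basis.mk (hli n le_rfl) (by
    rw [hrange, ← hgspan, hgtop])
  have hb : ∀ i : Fin n, b i = x i := fun i => Basis.mk_apply _ _ i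
  let e := Pi.basisFun F (Fin n)
  let P := e.toMatrix ⇑b
  haveI : Invertible P := e.invertibleToMatrix b
  have hPunit : IsUnit P := isUnit_of_invertible P
  have hPinv : P⁻¹ = b.toMatrix ⇑e := Matrix.inv_eq_left_inv (b.toMatrix_mul_toMatrix_flip e)
  refine ⟨P, hPunit, ?_⟩
  intro A hA i j hij
  have hAe : A = LinearMap.toMatrix e e (Matrix.mulVecLin A) := by
    ext i' j'
    rw [LinearMap.toMatrix_apply, Pi.basisFun_apply, Matrix.mulVecLin_apply,
      Matrix.mulVec_single_one, Pi.basisFun_repr, Matrix.col_apply]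
  have hconj : P⁻¹ * A * P = LinearMap.toMatrix b b (Matrix.mulVecLin A) := by
    conv_lhs => rw [hPinv, hAe]
    exact basis_toMatrix_mul_linearMap_toMatrix_mul_basis_toMatrix b e b e (Matrix.mulVecLin A)
  rw [hconj, LinearMap.toMatrix_apply]
  have hbj : Matrix.mulVecLin A (b j) ∈ g (j : ℕ) := by
    rw [Matrix.mulVecLin_apply, hb]
    exact hpick2 _ (hgne j j.isLt) A hA
  have hset : x '' Set.Iio (j : ℕ) = ⇑b '' {i : Fin n | (i : ℕ) < (j : ℕ)} := by
    ext v
    constructor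
    · rintro ⟨a, ha, rfl⟩
      exact ⟨⟨a, lt_trans ha j.isLt⟩, ha, hb _⟩
    · rintro ⟨i', hi', rfl⟩
      exact ⟨(i' : ℕ), hi', (hb i').symm⟩
  have hsupp := (Basis.mem_span_image b).mp (by rw [← hset, ← hgspan]; exact hbj)
  by_contra hc
  have hmem : i ∈ {i : Fin n | (i : ℕ) < (j : ℕ)} := hsupp (Finsupp.mem_support_iff.mpr hc)
  simp only [Set.mem_setOf_eq] at hmem
  have := Fin.le_def.mp hij
  omega

end Aux

set_option maxHeartbeats 1000000 in
/-- a subalgebra of `M_n(F)` all of whose elements are nilpotent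
is simultaneously strictly triangularizable, and any product of `n` of its
elements is zero. -/
theorem stmt13 {F : Type*} [Field F] {n : ℕ} (hn : 1 ≤ n)
    (𝒜 : NonUnitalSubalgebra F (Matrix (Fin n) (Fin n) F))
    (hnil : ∀ A ∈ 𝒜, IsNilpotent A) :
    (∃ P : Matrix (Fin n) (Fin n) F, IsUnit P ∧
      ∀ A ∈ 𝒜, ∀ i j : Fin n, j ≤ i → (P⁻¹ * A * P) i j = 0) ∧
    ∀ f : Fin n → Matrix (Fin n) (Fin n) F, (∀ i, f i ∈ 𝒜) →
      (List.ofFn f).prod = 0 := by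
  classical
  set ψ : Matrix (Fin n) (Fin n) F ≃ₐ[F] ((Fin n → F) →ₗ[F] (Fin n → F)) :=
    Matrix.toLinAlgEquiv' with hψ
  -- the Lie subalgebra of endomorphisms coming from `𝒜`
  let L : LieSubalgebra F (Module.End F (Fin n → F)) :=
    { toSubmodule := 𝒜.toSubmodule.map (ψ.toLinearMap : _ →ₗ[F] _)
      lie_mem' := by
        rintro f g hf hg
        obtain ⟨A, hA, rfl⟩ := hf
        obtain ⟨B, hB, rfl⟩ := hg
        have hA' : A ∈ 𝒜 := hA
        have hB' : B ∈ 𝒜 := hB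
        refine ⟨A * B - B * A,
          show A * B - B * A ∈ 𝒜 from sub_mem (mul_mem hA' hB') (mul_mem hB' hA'), ?_⟩
        show ψ (A * B - B * A) = ⁅ψ A, ψ B⁆
        rw [map_sub, map_mul, map_mul]
        exact (Ring.lie_def _ _).symm }
  -- Engel's theorem
  have hLnil : LieModule.IsNilpotent L (Fin n → F) := by
    rw [LieModule.isNilpotent_iff_forall' (R := F)]
    rintro ⟨fx, hfx⟩
    obtain ⟨A, hA, rfl⟩ := hfx
    obtain ⟨m, hm⟩ := hnil A hA
    refine ⟨m, ?_⟩
    have h1 : LieModule.toEnd F (↥L) (Fin n → F) ⟨ψ.toLinearMap A, ⟨A, hA, rfl⟩⟩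
        = LieModule.toEnd F (Module.End F (Fin n → F)) (Fin n → F) (ψ.toLinearMap A) :=
      rfl
    rw [h1, LieModule.toEnd_module_end, LieHom.id_apply]
    show (ψ A) ^ m = 0
    rw [← map_pow, hm, map_zero]
  obtain ⟨k, hk⟩ := (LieModule.isNilpotent_iff (R := F) (L := ↥L) (M := Fin n → F)).mp hLnil
  -- the chain of submodules
  let U : ℕ → Submodule F (Fin n → F) := fun j =>
    (LieModule.lowerCentralSeries F (↥L) (Fin n → F) (k - j) : Submodule F (Fin n → F))
  have hU0 : U 0 = ⊥ := by simp [U, hk]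
  have hUk : U k = ⊤ := by simp [U]
  have hUstep : ∀ j, 1 ≤ j → ∀ A ∈ 𝒜, ∀ v ∈ U j, A.mulVec v ∈ U (j - 1) := by
    intro j hj A hA v hv
    by_cases hcase : k - (j - 1) = 0
    · show A.mulVec v ∈ (LieModule.lowerCentralSeries F (↥L) (Fin n → F) (k - (j - 1)) :
        Submodule F (Fin n → F))
      rw [hcase]
      simp
    · have h2 : k - (j - 1) = (k - j) + 1 := by omega
      have hbr := LieSubmodule.lie_mem_lie
        (LieSubmodule.mem_top (⟨ψ A, ⟨A, hA, rfl⟩⟩ : L))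
        (N := LieModule.lowerCentralSeries F (↥L) (Fin n → F) (k - j)) hv
      rw [← LieModule.lowerCentralSeries_succ] at hbr
      have hval : (⁅(⟨ψ A, ⟨A, hA, rfl⟩⟩ : L), v⁆ : Fin n → F) = A.mulVec v := rfl
      show A.mulVec v ∈ (LieModule.lowerCentralSeries F (↥L) (Fin n → F) (k - (j - 1)) :
        Submodule F (Fin n → F))
      rw [h2, ← hval]
      exact hbr
  obtain ⟨P, hP, hPT⟩ := flag_basis 𝒜 U hU0 hUk hUstep
  refine ⟨⟨P, hP, hPT⟩, ?_⟩
  intro f hf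
  have hdet := (Matrix.isUnit_iff_isUnit_det P).mp hP
  have h2 : P * P⁻¹ = 1 := Matrix.mul_nonsing_inv P hdet
  have hzero : P⁻¹ * (List.ofFn f).prod * P = 0 := by
    rw [← conj_prod P hP]
    ext i j
    rw [Matrix.zero_apply]
    apply ut_prod
    · intro M hM i' j' hij'
      obtain ⟨A, hA, rfl⟩ := List.mem_map.mp hM
      obtain ⟨idx, rfl⟩ := List.mem_ofFn.mp hA
      exact hPT _ (hf idx) i' j' hij'
    · have : (j : ℕ) < n := j.isLt
      simp only [List.length_map, List.length_ofFn]
      omega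
  calc (List.ofFn f).prod
      = P * (P⁻¹ * (List.ofFn f).prod * P) * P⁻¹ := by
        simp only [← mul_assoc]
        rw [h2, one_mul, mul_assoc, h2, mul_one]
    _ = 0 := by rw [hzero, mul_zero, zero_mul]
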